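/- Let Ψ : [1,∞) → ℝ be twice continuously differentiable and define h : (0,∞) → ℝ by h(t) := Ψ((t + 1/t)/2). Then h is convex on (0,∞) if and only if (x² − 1)·(x + √(x² − 1))·Ψ''(x) + Ψ'(x) ≥ 0 for all x ∈ (1,∞). (By the characterization of generalized convexity of conformally invariant planar energies, this inequality therefore characterizes rank-one convexity, quasiconvexity and polyconvexity of the energy W(F) = Ψ(𝕂(F)) on GL⁺(2).) -/

import Mathlib

open Matrix MeasureTheory Set

noncomputable section

/-- The space of real 2×2 matrices. -/
abbrev Mat2 := Matrix (Fin 2) (Fin 2) ℝ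

/-- Squared Frobenius norm of a 2×2 matrix. -/
def frobSq (F : Mat2) : ℝ := ∑ i, ∑ j, (F i j) ^ 2

/-- The special orthogonal group SO(2). -/
def SO2 (R : Mat2) : Prop := R.transpose * R = 1 ∧ R.det = 1

/-- The conformal special orthogonal group CSO(2) = (0,∞)·SO(2). -/
def CSO2 (A : Mat2) : Prop := ∃ a : ℝ, 0 < a ∧ ∃ R : Mat2, SO2 R ∧ A = a • R

/-- Conformal invariance of an energy `W : GL⁺(2) → ℝ`. -/
def ConfInv (W : Mat2 → ℝ) : Prop :=
  ∀ F : Mat2, 0 < F.det → ∀ A B : Mat2, CSO2 A → CSO2 B → W (A * F * B) = W F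

/-- `l1, l2` are the singular values of `F` (in either order): they are positive and their
product and sum of squares agree with `det F` and the squared Frobenius norm of `F`. -/
def SingVals (F : Mat2) (l1 l2 : ℝ) : Prop :=
  0 < l1 ∧ 0 < l2 ∧ l1 * l2 = F.det ∧ l1 ^ 2 + l2 ^ 2 = frobSq F

/-- `l1 ≥ l2` are the ordered singular values of `F`. -/
def OrdSingVals (F : Mat2) (l1 l2 : ℝ) : Prop := SingVals F l1 l2 ∧ l2 ≤ l1

/-- The larger singular value of a 2×2 matrix with positive determinant. -/
def sv1 (F : Mat2) : ℝ :=
  Real.sqrt ((frobSq F + Real.sqrt (frobSq F ^ 2 - 4 * F.det ^ 2)) / 2)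

/-- The smaller singular value of a 2×2 matrix with positive determinant. -/
def sv2 (F : Mat2) : ℝ :=
  Real.sqrt ((frobSq F - Real.sqrt (frobSq F ^ 2 - 4 * F.det ^ 2)) / 2)

/-- The distortion 𝕂(F) = ‖F‖²/(2 det F). -/
def Kdist (F : Mat2) : ℝ := frobSq F / (2 * F.det)

/-- Rank-one convexity of an energy on GL⁺(2). -/
def RankOneConvex (W : Mat2 → ℝ) : Prop :=
  ∀ F : Mat2, 0 < F.det → ∀ H : Mat2, H.rank = 1 → 0 < (F + H).det →
    ∀ t : ℝ, 0 ≤ t → t ≤ 1 → W (F + t • H) ≤ (1 - t) * W F + t * W (F + H)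

/-- The gradient (Jacobian matrix) of a map ϑ : ℝ² → ℝ². -/
def gradMat (ϑ : (Fin 2 → ℝ) → (Fin 2 → ℝ)) (x : Fin 2 → ℝ) : Mat2 :=
  Matrix.of fun i j => fderiv ℝ ϑ x (Pi.single j 1) i

/-- Quasiconvexity of an energy on GL⁺(2). -/
def Quasiconvex2 (W : Mat2 → ℝ) : Prop :=
  ∀ Ω : Set (Fin 2 → ℝ), IsOpen Ω → Bornology.IsBounded Ω →
    ∀ F₀ : Mat2, 0 < F₀.det →
    ∀ ϑ : (Fin 2 → ℝ) → (Fin 2 → ℝ), ContDiff ℝ (⊤ : ℕ∞) ϑ → HasCompactSupport ϑ →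
      tsupport ϑ ⊆ Ω → (∀ x ∈ Ω, 0 < (F₀ + gradMat ϑ x).det) →
      W F₀ * (volume Ω).toReal ≤ ∫ x in Ω, W (F₀ + gradMat ϑ x)

/-- Polyconvexity of an energy on GL⁺(2): `W(F) = P(F, det F)` for some convex
function `P : ℝ^{2×2} × ℝ → ℝ ∪ {+∞}`. -/
def Polyconvex (W : Mat2 → ℝ) : Prop :=
  ∃ P : Mat2 × ℝ → EReal,
    (∀ X Y : Mat2 × ℝ, ∀ t : ℝ, 0 ≤ t → t ≤ 1 →
      P (t • X + (1 - t) • Y) ≤ (t : ℝ) * P X + ((1 - t : ℝ) : EReal) * P Y) ∧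
    (∀ F : Mat2, 0 < F.det → (W F : EReal) = P (F, F.det))

/-- The rank-one convex envelope of `W` on GL⁺(2). -/
def RWenv (W : Mat2 → ℝ) (F : Mat2) : ℝ :=
  sSup {y | ∃ w : Mat2 → ℝ, RankOneConvex w ∧ (∀ X : Mat2, 0 < X.det → w X ≤ W X) ∧ y = w F}

/-- The quasiconvex envelope of `W` on GL⁺(2). -/
def QWenv (W : Mat2 → ℝ) (F : Mat2) : ℝ :=
  sSup {y | ∃ w : Mat2 → ℝ, Quasiconvex2 w ∧ (∀ X : Mat2, 0 < X.det → w X ≤ W X) ∧ y = w F}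

/-- The polyconvex envelope of `W` on GL⁺(2). -/
def PWenv (W : Mat2 → ℝ) (F : Mat2) : ℝ :=
  sSup {y | ∃ w : Mat2 → ℝ, Polyconvex w ∧ (∀ X : Mat2, 0 < X.det → w X ≤ W X) ∧ y = w F}

/-- The monotone-convex envelope of `h : [1,∞) → ℝ`. -/
def CmEnv (h : ℝ → ℝ) (t : ℝ) : ℝ :=
  sSup {y | ∃ p : ℝ → ℝ, ConvexOn ℝ (Set.Ici (1 : ℝ)) p ∧ MonotoneOn p (Set.Ici (1 : ℝ)) ∧
    (∀ s : ℝ, 1 ≤ s → p s ≤ h s) ∧ y = p t}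

/-- The convex envelope of `h : [1,∞) → ℝ`. -/
def CEnv (h : ℝ → ℝ) (t : ℝ) : ℝ :=
  sSup {y | ∃ p : ℝ → ℝ, ConvexOn ℝ (Set.Ici (1 : ℝ)) p ∧
    (∀ s : ℝ, 1 ≤ s → p s ≤ h s) ∧ y = p t}

/-- The special orthogonal group SO(n). -/
def SOnN {n : ℕ} (R : Matrix (Fin n) (Fin n) ℝ) : Prop := R.transpose * R = 1 ∧ R.det = 1

/-- The conformal special orthogonal group CSO(n) = (0,∞)·SO(n). -/
def CSOnN {n : ℕ} (A : Matrix (Fin n) (Fin n) ℝ) : Prop :=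
  ∃ a : ℝ, 0 < a ∧ ∃ R : Matrix (Fin n) (Fin n) ℝ, SOnN R ∧ A = a • R

/-- Conformal invariance of an energy `W : GL⁺(n) → ℝ`. -/
def ConfInvN {n : ℕ} (W : Matrix (Fin n) (Fin n) ℝ → ℝ) : Prop :=
  ∀ F : Matrix (Fin n) (Fin n) ℝ, 0 < F.det →
    ∀ A B : Matrix (Fin n) (Fin n) ℝ, CSOnN A → CSOnN B → W (A * F * B) = W F

/-- Rank-one convexity of an energy on GL⁺(n). -/
def RankOneConvexN {n : ℕ} (W : Matrix (Fin n) (Fin n) ℝ → ℝ) : Prop :=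
  ∀ F : Matrix (Fin n) (Fin n) ℝ, 0 < F.det →
    ∀ H : Matrix (Fin n) (Fin n) ℝ, H.rank = 1 → 0 < (F + H).det →
    ∀ t : ℝ, 0 ≤ t → t ≤ 1 → W (F + t • H) ≤ (1 - t) * W F + t * W (F + H)

/-- The gradient (Jacobian matrix) of a map ϑ : ℝⁿ → ℝⁿ. -/
def gradMatN {n : ℕ} (ϑ : (Fin n → ℝ) → (Fin n → ℝ)) (x : Fin n → ℝ) :
    Matrix (Fin n) (Fin n) ℝ :=
  Matrix.of fun i j => fderiv ℝ ϑ x (Pi.single j 1) i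

/-- Quasiconvexity of an energy on GL⁺(n). -/
def QuasiconvexN {n : ℕ} (W : Matrix (Fin n) (Fin n) ℝ → ℝ) : Prop :=
  ∀ Ω : Set (Fin n → ℝ), IsOpen Ω → Bornology.IsBounded Ω →
    ∀ F₀ : Matrix (Fin n) (Fin n) ℝ, 0 < F₀.det →
    ∀ ϑ : (Fin n → ℝ) → (Fin n → ℝ), ContDiff ℝ (⊤ : ℕ∞) ϑ → HasCompactSupport ϑ →
      tsupport ϑ ⊆ Ω → (∀ x ∈ Ω, 0 < (F₀ + gradMatN ϑ x).det) →
      W F₀ * (volume Ω).toReal ≤ ∫ x in Ω, W (F₀ + gradMatN ϑ x)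

/-- The rank-one convex envelope of `W` on GL⁺(n). -/
def RWenvN {n : ℕ} (W : Matrix (Fin n) (Fin n) ℝ → ℝ) (F : Matrix (Fin n) (Fin n) ℝ) : ℝ :=
  sSup {y | ∃ w : Matrix (Fin n) (Fin n) ℝ → ℝ, RankOneConvexN w ∧
    (∀ X : Matrix (Fin n) (Fin n) ℝ, 0 < X.det → w X ≤ W X) ∧ y = w F}

/-- The quasiconvex envelope of `W` on GL⁺(n). -/
def QWenvN {n : ℕ} (W : Matrix (Fin n) (Fin n) ℝ → ℝ) (F : Matrix (Fin n) (Fin n) ℝ) : ℝ :=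
  sSup {y | ∃ w : Matrix (Fin n) (Fin n) ℝ → ℝ, QuasiconvexN w ∧
    (∀ X : Matrix (Fin n) (Fin n) ℝ, 0 < X.det → w X ≤ W X) ∧ y = w F}

end

section CvxCritAux
open Topology

namespace CvxCrit

/-- The map k(t) = (t + 1/t)/2. -/
private noncomputable def kk (t : ℝ) : ℝ := (t + t⁻¹) / 2

/-- Its derivative. -/
private noncomputable def kd (t : ℝ) : ℝ := (1 - (t ^ 2)⁻¹) / 2

/-- Its second derivative. -/
private noncomputable def kdd (t : ℝ) : ℝ := (t ^ 3)⁻¹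

private lemma kk_ge_one {t : ℝ} (ht : 0 < t) : 1 ≤ kk t := by
  have h1 : t * t⁻¹ = 1 := mul_inv_cancel₀ ht.ne'
  have h2 : 0 < t⁻¹ := inv_pos.2 ht
  unfold kk
  nlinarith [mul_nonneg (mul_nonneg (sq_nonneg (t - 1)) h2.le) h2.le, sq_nonneg (t - 1)]

private lemma hasDerivAt_kk {t : ℝ} (ht : 0 < t) : HasDerivAt kk (kd t) t := by
  have h1 : HasDerivAt (fun s : ℝ => s⁻¹) (-((t ^ 2)⁻¹)) t := by
    simpa using hasDerivAt_inv ht.ne'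
  have h2 : HasDerivAt (fun s : ℝ => (s + s⁻¹) / 2) ((1 + -((t ^ 2)⁻¹)) / 2) t :=
    ((hasDerivAt_id t).add h1).div_const 2
  convert h2 using 1
  · rfl
  · unfold kd; ring

private lemma hasDerivAt_kd {t : ℝ} (ht : 0 < t) : HasDerivAt kd (kdd t) t := by
  have h1 : HasDerivAt (fun s : ℝ => (s ^ 2)⁻¹) (-(2 * t ^ 1) / (t ^ 2) ^ 2) t :=
    (hasDerivAt_pow 2 t).inv (pow_ne_zero 2 ht.ne')
  have h2 : HasDerivAt (fun s : ℝ => (1 - (s ^ 2)⁻¹) / 2)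
      ((0 - -(2 * t ^ 1) / (t ^ 2) ^ 2) / 2) t := ((hasDerivAt_const t 1).sub h1).div_const 2
  convert h2 using 1
  · rfl
  unfold kdd
  field_simp
  ring

private lemma deriv_nonneg_of_monotoneOn {g : ℝ → ℝ} {s : Set ℝ} (hs : IsOpen s)
    (hm : MonotoneOn g s) {t e : ℝ} (ht : t ∈ s) (hd : HasDerivAt g e t) : 0 ≤ e := by
  have h1 : HasDerivWithinAt g e (Ioi t) t := hd.hasDerivWithinAt
  rw [hasDerivWithinAt_iff_tendsto_slope' (notMem_Ioi_self)] at h1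
  refine ge_of_tendsto h1 ?_
  have hmem : s ∈ 𝓝[Ioi t] t := nhdsWithin_le_nhds (hs.mem_nhds ht)
  filter_upwards [hmem, self_mem_nhdsWithin] with y hy hy2
  have hty : t < y := hy2
  rw [slope_def_field]
  exact div_nonneg (sub_nonneg.2 (hm ht hy hty.le)) (sub_nonneg.2 hty.le)


private noncomputable def P1 (Ψ : ℝ → ℝ) : ℝ → ℝ := derivWithin Ψ (Ici 1)

private noncomputable def P2 (Ψ : ℝ → ℝ) : ℝ → ℝ := derivWithin (P1 Ψ) (Ici 1)

private noncomputable def gg (Ψ : ℝ → ℝ) (t : ℝ) : ℝ := P1 Ψ (kk t) * kd t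

private noncomputable def EE (Ψ : ℝ → ℝ) (t : ℝ) : ℝ :=
  P2 Ψ (kk t) * kd t * kd t + P1 Ψ (kk t) * kdd t

variable {Ψ : ℝ → ℝ} (hΨ : ContDiffOn ℝ 2 Ψ (Set.Ici (1 : ℝ)))

private lemma P1_contDiffOn (hΨ : ContDiffOn ℝ 2 Ψ (Set.Ici (1 : ℝ))) :
    ContDiffOn ℝ 1 (P1 Ψ) (Ici 1) :=
  hΨ.derivWithin (uniqueDiffOn_Ici 1) (by norm_num)

private lemma hasDerivAt_h (hΨ : ContDiffOn ℝ 2 Ψ (Set.Ici (1 : ℝ)))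
    {h : ℝ → ℝ} (hdef : ∀ t : ℝ, 0 < t → h t = Ψ ((t + t⁻¹) / 2))
    {t : ℝ} (ht : 0 < t) : HasDerivAt h (gg Ψ t) t := by
  have hx : kk t ∈ Ici (1 : ℝ) := kk_ge_one ht
  have hΨd : DifferentiableOn ℝ Ψ (Ici 1) := hΨ.differentiableOn (by norm_num)
  have hΨw : HasDerivWithinAt Ψ (P1 Ψ (kk t)) (Ici 1) (kk t) :=
    (hΨd (kk t) hx).hasDerivWithinAt
  have hmaps : Set.MapsTo kk (Ioi 0) (Ici 1) := fun s hs => kk_ge_one hs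
  have comp : HasDerivWithinAt (Ψ ∘ kk) (P1 Ψ (kk t) * kd t) (Ioi 0) t :=
    hΨw.comp t (hasDerivAt_kk ht).hasDerivWithinAt hmaps
  have hda : HasDerivAt (Ψ ∘ kk) (P1 Ψ (kk t) * kd t) t :=
    comp.hasDerivAt (Ioi_mem_nhds ht)
  have heq : h =ᶠ[𝓝 t] Ψ ∘ kk := by
    filter_upwards [Ioi_mem_nhds ht] with y hy
    exact hdef y hy
  exact hda.congr_of_eventuallyEq heq

private lemma hasDerivAt_gg (hΨ : ContDiffOn ℝ 2 Ψ (Set.Ici (1 : ℝ)))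
    {t : ℝ} (ht : 0 < t) : HasDerivAt (gg Ψ) (EE Ψ t) t := by
  have hx : kk t ∈ Ici (1 : ℝ) := kk_ge_one ht
  have hP1d : DifferentiableOn ℝ (P1 Ψ) (Ici 1) :=
    (P1_contDiffOn hΨ).differentiableOn one_ne_zero
  have hP1w : HasDerivWithinAt (P1 Ψ) (P2 Ψ (kk t)) (Ici 1) (kk t) :=
    (hP1d (kk t) hx).hasDerivWithinAt
  have hmaps : Set.MapsTo kk (Ioi 0) (Ici 1) := fun s hs => kk_ge_one hs
  have comp : HasDerivWithinAt (P1 Ψ ∘ kk) (P2 Ψ (kk t) * kd t) (Ioi 0) t :=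
    hP1w.comp t (hasDerivAt_kk ht).hasDerivWithinAt hmaps
  have hda : HasDerivAt (fun s => P1 Ψ (kk s)) (P2 Ψ (kk t) * kd t) t :=
    comp.hasDerivAt (Ioi_mem_nhds ht)
  have := hda.mul (hasDerivAt_kd ht)
  exact this

private lemma alg {t : ℝ} (ht : 0 < t) :
    EE Ψ t * t ^ 3 = ((kk t) ^ 2 - 1) * t * P2 Ψ (kk t) + P1 Ψ (kk t) := by
  have h0 : t ≠ 0 := ht.ne'
  unfold EE kk kd kdd
  field_simp
  ring

private lemma EE_nonneg_iff {t : ℝ} (ht : 0 < t) :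
    0 ≤ EE Ψ t ↔ 0 ≤ ((kk t) ^ 2 - 1) * t * P2 Ψ (kk t) + P1 Ψ (kk t) := by
  rw [← alg ht]
  have h3 : (0:ℝ) < t ^ 3 := by positivity
  exact (mul_nonneg_iff_of_pos_right h3).symm


private lemma kk_inv_formula {x : ℝ} (hx : 1 < x) :
    1 < x + Real.sqrt (x ^ 2 - 1) ∧ kk (x + Real.sqrt (x ^ 2 - 1)) = x := by
  set s := Real.sqrt (x ^ 2 - 1) with hsdef
  have hx2 : (0:ℝ) ≤ x ^ 2 - 1 := by nlinarith
  have hs2 : s ^ 2 = x ^ 2 - 1 := Real.sq_sqrt hx2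
  have hs0 : 0 ≤ s := Real.sqrt_nonneg _
  have ht1 : 1 < x + s := by linarith
  refine ⟨ht1, ?_⟩
  have htne : x + s ≠ 0 := by linarith
  have hinv : (x + s)⁻¹ = x - s := by
    refine inv_eq_of_mul_eq_one_right ?_
    nlinarith
  unfold kk
  rw [hinv]
  ring

private lemma kk_add_sqrt {t : ℝ} (ht : 1 < t) :
    kk t + Real.sqrt ((kk t) ^ 2 - 1) = t := by
  have ht0 : (0:ℝ) < t := by linarith
  have htne : t ≠ 0 := ht0.ne'
  have hinv : t⁻¹ ≤ 1 := by
    rw [inv_le_one_iff₀]; right; exact ht.le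
  have hsq : (kk t) ^ 2 - 1 = ((t - t⁻¹) / 2) ^ 2 := by
    unfold kk
    field_simp
    ring
  have hnn : 0 ≤ (t - t⁻¹) / 2 := by linarith
  rw [hsq, Real.sqrt_sq hnn]
  unfold kk
  ring

private lemma le_kk_add_sqrt {t : ℝ} (ht : 0 < t) :
    t ≤ kk t + Real.sqrt ((kk t) ^ 2 - 1) := by
  rcases le_or_gt t 1 with h | h
  · have h1 : 1 ≤ kk t := kk_ge_one ht
    have h2 : 0 ≤ Real.sqrt ((kk t) ^ 2 - 1) := Real.sqrt_nonneg _
    linarith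
  · rw [kk_add_sqrt h]


private lemma kk_gt_one {t : ℝ} (ht : 0 < t) (hne : t ≠ 1) : 1 < kk t := by
  have h1 : t * t⁻¹ = 1 := mul_inv_cancel₀ ht.ne'
  have h2 : 0 < t⁻¹ := inv_pos.2 ht
  have h3 : (t - 1) ^ 2 ≠ 0 := pow_ne_zero _ (sub_ne_zero.2 hne)
  have h4 : 0 < (t - 1) ^ 2 := lt_of_le_of_ne (sq_nonneg _) (Ne.symm h3)
  unfold kk
  nlinarith [mul_pos (mul_pos h4 h2) h2]

private lemma EE_nonneg_of_gt_one (hΨ : ContDiffOn ℝ 2 Ψ (Set.Ici (1 : ℝ)))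
    (hcrit : ∀ x : ℝ, 1 < x →
      0 ≤ (x ^ 2 - 1) * (x + Real.sqrt (x ^ 2 - 1)) * P2 Ψ x + P1 Ψ x)
    {t : ℝ} (ht : 1 < t) : 0 ≤ EE Ψ t := by
  have ht0 : (0:ℝ) < t := by linarith
  rw [EE_nonneg_iff ht0]
  have hx : 1 < kk t := kk_gt_one ht0 (by linarith)
  have := hcrit (kk t) hx
  rwa [kk_add_sqrt ht] at this

private lemma P1_nonneg (hΨ : ContDiffOn ℝ 2 Ψ (Set.Ici (1 : ℝ)))
    (hcrit : ∀ x : ℝ, 1 < x →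
      0 ≤ (x ^ 2 - 1) * (x + Real.sqrt (x ^ 2 - 1)) * P2 Ψ x + P1 Ψ x) :
    ∀ x : ℝ, 1 ≤ x → 0 ≤ P1 Ψ x := by
  have hgt : ∀ x : ℝ, 1 < x → 0 ≤ P1 Ψ x := by
    intro x hx
    obtain ⟨ht1, hkt⟩ := kk_inv_formula hx
    set t := x + Real.sqrt (x ^ 2 - 1) with htdef
    have ht0 : (0:ℝ) < t := by linarith
    have hmono : MonotoneOn (gg Ψ) (Ici 1) := by
      apply monotoneOn_of_deriv_nonneg (convex_Ici 1)
      · intro s hs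
        exact ((hasDerivAt_gg hΨ (lt_of_lt_of_le one_pos hs)).differentiableAt.continuousAt).continuousWithinAt
      · rw [interior_Ici]
        intro s hs
        exact (hasDerivAt_gg hΨ (lt_trans one_pos hs)).differentiableAt.differentiableWithinAt
      · rw [interior_Ici]
        intro s hs
        rw [(hasDerivAt_gg hΨ (lt_trans one_pos hs)).deriv]
        exact EE_nonneg_of_gt_one hΨ hcrit hs
    have hg1 : gg Ψ 1 = 0 := by unfold gg kd; norm_num
    have hgt0 : 0 ≤ gg Ψ t := by
      have := hmono (self_mem_Ici) (mem_Ici.2 ht1.le) ht1.le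
      rwa [hg1] at this
    have hkd : 0 < kd t := by
      have h2 : (1:ℝ) < t ^ 2 := by nlinarith
      have h3 : (t ^ 2)⁻¹ < 1 := by
        rw [inv_lt_one_iff₀]; right; exact h2
      unfold kd; linarith
    rw [gg, hkt] at hgt0
    nlinarith [hgt0, hkd]
  intro x hx
  rcases eq_or_lt_of_le hx with heq | h
  · have hcont : ContinuousWithinAt (P1 Ψ) (Ici 1) 1 :=
      (P1_contDiffOn hΨ).continuousOn 1 self_mem_Ici
    have htend : Filter.Tendsto (P1 Ψ) (𝓝[Ioi 1] 1) (𝓝 (P1 Ψ 1)) :=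
      hcont.mono_left (nhdsWithin_mono _ Ioi_subset_Ici_self)
    have hnn : 0 ≤ P1 Ψ 1 := by
      refine ge_of_tendsto htend ?_
      filter_upwards [self_mem_nhdsWithin] with y hy
      exact hgt y hy
    rw [← heq]; exact hnn
  · exact hgt x h

private lemma deriv_eq_P1 {x : ℝ} (hx : 1 < x) : deriv Ψ x = P1 Ψ x :=
  (derivWithin_of_mem_nhds (Ici_mem_nhds hx)).symm

private lemma deriv2_eq_P2 {x : ℝ} (hx : 1 < x) : deriv (deriv Ψ) x = P2 Ψ x := by
  have heq : deriv Ψ =ᶠ[𝓝 x] P1 Ψ := by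
    filter_upwards [Ioi_mem_nhds hx] with y hy
    exact deriv_eq_P1 hy
  calc deriv (deriv Ψ) x = deriv (P1 Ψ) x := heq.deriv_eq
    _ = P2 Ψ x := (derivWithin_of_mem_nhds (Ici_mem_nhds hx)).symm

end CvxCrit


end CvxCritAux

/-- For `Ψ : [1,∞) → ℝ` twice continuously differentiable and
`h(t) := Ψ((t + 1/t)/2)`, the function `h` is convex on `(0,∞)` if and only if
`(x² − 1)(x + √(x² − 1)) Ψ''(x) + Ψ'(x) ≥ 0` for all `x ∈ (1,∞)`. -/
theorem convexity_criterion_in_terms_of_distortion (Ψ : ℝ → ℝ)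
    (hΨ : ContDiffOn ℝ 2 Ψ (Set.Ici (1 : ℝ)))
    (h : ℝ → ℝ) (hdef : ∀ t : ℝ, 0 < t → h t = Ψ ((t + t⁻¹) / 2)) :
    ConvexOn ℝ (Set.Ioi (0 : ℝ)) h ↔
      ∀ x : ℝ, 1 < x →
        0 ≤ (x ^ 2 - 1) * (x + Real.sqrt (x ^ 2 - 1)) * deriv (deriv Ψ) x + deriv Ψ x := by
  constructor
  · intro hcv x hx
    rw [CvxCrit.deriv2_eq_P2 hx, CvxCrit.deriv_eq_P1 hx]
    obtain ⟨ht1, hkt⟩ := CvxCrit.kk_inv_formula hx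
    have ht0 : (0:ℝ) < x + Real.sqrt (x ^ 2 - 1) := by linarith
    have hmono : MonotoneOn (CvxCrit.gg Ψ) (Ioi 0) := by
      intro a ha b hb hab
      rcases eq_or_lt_of_le hab with rfl | hlt
      · exact le_refl _
      · have h1 := hcv.le_slope_of_hasDerivAt ha hb hlt (CvxCrit.hasDerivAt_h hΨ hdef ha)
        have h2 := hcv.slope_le_of_hasDerivAt ha hb hlt (CvxCrit.hasDerivAt_h hΨ hdef hb)
        exact h1.trans h2
    have hE := CvxCrit.deriv_nonneg_of_monotoneOn isOpen_Ioi hmono (mem_Ioi.2 ht0)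
      (CvxCrit.hasDerivAt_gg hΨ ht0)
    rw [CvxCrit.EE_nonneg_iff ht0, hkt] at hE
    exact hE
  · intro hcrit
    have hcrit' : ∀ x : ℝ, 1 < x →
        0 ≤ (x ^ 2 - 1) * (x + Real.sqrt (x ^ 2 - 1)) * CvxCrit.P2 Ψ x + CvxCrit.P1 Ψ x := by
      intro x hx
      rw [← CvxCrit.deriv_eq_P1 hx, ← CvxCrit.deriv2_eq_P2 hx]
      exact hcrit x hx
    have hP1 := CvxCrit.P1_nonneg hΨ hcrit'
    apply convexOn_of_hasDerivWithinAt2_nonneg (convex_Ioi (0:ℝ))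
      (f' := CvxCrit.gg Ψ) (f'' := CvxCrit.EE Ψ)
    · intro t ht
      exact ((CvxCrit.hasDerivAt_h hΨ hdef ht).differentiableAt.continuousAt).continuousWithinAt
    · intro t ht
      rw [interior_Ioi] at ht
      exact (CvxCrit.hasDerivAt_h hΨ hdef ht).hasDerivWithinAt
    · intro t ht
      rw [interior_Ioi] at ht
      exact (CvxCrit.hasDerivAt_gg hΨ ht).hasDerivWithinAt
    · intro t ht
      rw [interior_Ioi] at ht
      have ht0 : (0:ℝ) < t := ht
      rw [CvxCrit.EE_nonneg_iff ht0]
      have h1 : 1 ≤ CvxCrit.kk t := CvxCrit.kk_ge_one ht0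
      rcases eq_or_lt_of_le h1 with heq | hgt
      · rw [← heq]
        norm_num
        exact hP1 1 le_rfl
      · have hcx := hcrit' (CvxCrit.kk t) hgt
        have hle := CvxCrit.le_kk_add_sqrt ht0
        have hs0 : 0 ≤ Real.sqrt ((CvxCrit.kk t) ^ 2 - 1) := Real.sqrt_nonneg _
        have hx21 : 0 < (CvxCrit.kk t) ^ 2 - 1 := by nlinarith
        have hp1 := hP1 (CvxCrit.kk t) h1
        rcases le_or_gt 0 (CvxCrit.P2 Ψ (CvxCrit.kk t)) with hc | hc
        · have hnn : 0 ≤ ((CvxCrit.kk t) ^ 2 - 1) * t * CvxCrit.P2 Ψ (CvxCrit.kk t) :=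
            mul_nonneg (mul_nonneg hx21.le ht0.le) hc
          linarith
        · have key : 0 ≤ ((CvxCrit.kk t) ^ 2 - 1) *
              ((CvxCrit.kk t + Real.sqrt ((CvxCrit.kk t) ^ 2 - 1)) - t) *
              (-(CvxCrit.P2 Ψ (CvxCrit.kk t))) :=
            mul_nonneg (mul_nonneg hx21.le (sub_nonneg.2 hle)) (neg_nonneg.2 hc.le)
          nlinarith [key, hcx]
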